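/- The Laplace transform of x ↦ E_α(−x^α) equals p^(α−1)/(1 + p^α) for p > 1, where E_α is the Mittag-Leffler function. -/

import Mathlib

open MeasureTheory Real Set

theorem mittagLeffler_laplace_transform (α p : ℝ) (hα : 0 < α) (hp : 1 < p) :
    ∫ x in Ioi (0 : ℝ),
        Real.exp (-p * x) * ∑' k : ℕ, (-(x ^ α)) ^ k / Real.Gamma (1 + k * α)
      = p ^ (α - 1) / (1 + p ^ α) := by
  have hp0 : 0 < p := lt_trans one_pos hp
  set F : ℕ → ℝ → ℝ := fun k x =>
    ((-1 : ℝ)) ^ k / Real.Gamma (1 + k * α) * (x ^ ((k : ℝ) * α) * Real.exp (-p * x)) with hF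
  have hΓpos : ∀ k : ℕ, 0 < Real.Gamma (1 + k * α) := by
    intro k
    apply Real.Gamma_pos_of_pos
    positivity
  -- value of each integral
  have key : ∀ k : ℕ, ∫ x in Ioi (0 : ℝ), x ^ ((k : ℝ) * α) * Real.exp (-p * x)
      = (1 / p) ^ ((k : ℝ) * α + 1) * Real.Gamma ((k : ℝ) * α + 1) := by
    intro k
    have h := Real.integral_rpow_mul_exp_neg_mul_Ioi (a := (k : ℝ) * α + 1) (r := p)
      (by positivity) hp0
    simpa [add_sub_cancel_right, neg_mul] using h
  -- integrability
  have hint : ∀ k : ℕ, IntegrableOn (fun x => x ^ ((k : ℝ) * α) * Real.exp (-p * x)) (Ioi 0) := by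
    intro k
    have h := integrableOn_rpow_mul_exp_neg_mul_rpow (s := (k : ℝ) * α) (p := 1) (b := p)
      (lt_of_lt_of_le neg_one_lt_zero (by positivity)) one_pos hp0
    simpa [Real.rpow_one, neg_mul] using h
  have hFint : ∀ k : ℕ, Integrable (F k) (volume.restrict (Ioi 0)) := fun k =>
    ((hint k).const_mul _)
  -- norm integrals
  have hnorm : ∀ k : ℕ, (∫ x in Ioi (0 : ℝ), ‖F k x‖) = (1 / p) ^ ((k : ℝ) * α + 1) := by
    intro k
    have h1 : ∀ x ∈ Ioi (0 : ℝ), ‖F k x‖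
        = (1 / Real.Gamma (1 + k * α)) * (x ^ ((k : ℝ) * α) * Real.exp (-p * x)) := by
      intro x hx
      have hx0 : (0 : ℝ) < x := hx
      rw [hF]
      simp only
      rw [Real.norm_eq_abs, abs_mul, abs_div, abs_pow, abs_neg, abs_one, one_pow,
        abs_of_pos (hΓpos k), abs_mul, abs_of_nonneg (Real.rpow_nonneg hx0.le _),
        abs_of_pos (Real.exp_pos _)]
      try ring
    rw [setIntegral_congr_fun measurableSet_Ioi h1, integral_const_mul, key k]
    rw [show (k : ℝ) * α + 1 = 1 + k * α by ring]
    field_simp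
  have heq' : ∀ k : ℕ, ((1 : ℝ) / p) ^ (1 + (k : ℝ) * α) = (1 / p) * ((1 / p) ^ α) ^ k := by
    intro k
    rw [Real.rpow_add (by positivity), Real.rpow_one, ← Real.rpow_natCast ((1 / p) ^ α) k,
      ← Real.rpow_mul (by positivity), mul_comm (k : ℝ) α]
  have hsum : Summable fun k : ℕ => (1 / p) ^ ((k : ℝ) * α + 1) := by
    have hq : (1 / p) ^ α < 1 := by
      apply Real.rpow_lt_one (by positivity) _ hα
      rw [div_lt_one hp0]; linarith
    have hgeom : Summable fun k : ℕ => ((1 / p) ^ α) ^ k :=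
      summable_geometric_of_lt_one (by positivity) hq
    have heq : ∀ k : ℕ, (1 / p) ^ ((k : ℝ) * α + 1) = (1 / p) * ((1 / p) ^ α) ^ k := by
      intro k
      rw [Real.rpow_add (by positivity), Real.rpow_one, ← Real.rpow_natCast ((1/p) ^ α) k,
        ← Real.rpow_mul (by positivity), mul_comm (α) (k : ℝ)]
      ring
    simp_rw [heq]
    exact hgeom.mul_left _
  -- rewrite integrand as tsum of F
  have hcongr : ∀ x ∈ Ioi (0 : ℝ),
      Real.exp (-p * x) * ∑' k : ℕ, (-(x ^ α)) ^ k / Real.Gamma (1 + k * α)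
        = ∑' k : ℕ, F k x := by
    intro x hx
    have hx0 : (0 : ℝ) < x := hx
    rw [← tsum_mul_left]
    congr 1
    funext k
    rw [hF]
    simp only
    have hxk : (-(x ^ α)) ^ k = (-1 : ℝ) ^ k * x ^ ((k : ℝ) * α) := by
      rw [neg_pow, ← Real.rpow_natCast (x ^ α) k, ← Real.rpow_mul hx0.le, mul_comm α (k : ℝ)]
    rw [hxk]; ring
  rw [setIntegral_congr_fun measurableSet_Ioi hcongr]
  rw [← MeasureTheory.integral_tsum_of_summable_integral_norm hFint (by simp_rw [hnorm]; exact hsum)]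
  -- compute the sum
  have hval : ∀ k : ℕ, (∫ x in Ioi (0 : ℝ), F k x)
      = (1 / p) * (-(1 / p) ^ α) ^ k := by
    intro k
    rw [hF]
    simp only
    rw [integral_const_mul, key k, show (k : ℝ) * α + 1 = 1 + k * α by ring, heq' k, neg_pow ((1 / p) ^ α)]
    field_simp
  simp_rw [hval]
  rw [tsum_mul_left, tsum_geometric_of_norm_lt_one (by
    rw [norm_neg, Real.norm_of_nonneg (by positivity)]
    apply Real.rpow_lt_one (by positivity) _ hα
    rw [div_lt_one hp0]; linarith)]
  rw [sub_neg_eq_add]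
  have hpa : ((1 : ℝ) / p) ^ α = (p ^ α)⁻¹ := by
    rw [one_div, ← Real.inv_rpow hp0.le]
  rw [hpa]
  have hpα : (0 : ℝ) < p ^ α := Real.rpow_pos_of_pos hp0 α
  have h1pα : (0 : ℝ) < 1 + p ^ α := by positivity
  rw [Real.rpow_sub hp0, Real.rpow_one]
  rw [div_div, eq_div_iff (by positivity), one_div, inv_mul_eq_div,
    div_mul_eq_mul_div, div_eq_iff hp0.ne']
  field_simp
  ring
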